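/- arXiv:2008.01164 — 2 statements merged into one kernel-verified Lean document; each statement's English description precedes it below -/
import Mathlib

section
/- Let T be a set of permutations and π a permutation that does not avoid T^r, with T-clumping (a_0, …, a_k). Then s_T(π) = a_{k-1}^r · s_T(a_0 ⋯ a_{k-2} a_k), where a^r denotes the reverse of a. -/
open List

attribute [local instance] Classical.propDecidable

/-- `u` is order-isomorphic to `v`. -/
def OrdIso (u v : List ℕ) : Prop :=
  u.length = v.length ∧
    ∀ i j, i < u.length → j < u.length →
      (u.getD i 0 < u.getD j 0 ↔ v.getD i 0 < v.getD j 0)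

/-- The word `w` contains the pattern `p`. -/
def Contains (w p : List ℕ) : Prop :=
  ∃ u, u.Sublist w ∧ OrdIso u p

/-- The word `w` avoids every pattern in `T`. -/
def AvoidsSet (T : Set (List ℕ)) (w : List ℕ) : Prop :=
  ∀ p ∈ T, ¬ Contains w p

/-- One step of the `T`-avoiding stack machine: state is (input, stack, output);
the stack is read top to bottom (head is the top). -/
noncomputable def sTaux (T : Set (List ℕ)) : List ℕ → List ℕ → List ℕ → List ℕ
  | [], stack, out => out ++ stack
  | x :: rest, stack, out =>
    if AvoidsSet T (x :: stack) then sTaux T rest (x :: stack) out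
    else
      match stack with
      | [] => sTaux T rest [x] out
      | y :: s => sTaux T (x :: rest) s (out ++ [y])
termination_by input stack _ => 2 * input.length + stack.length
decreasing_by all_goals first | (simp_wf; omega) | omega | simp_wf

/-- The stack-sorting map `s_T`. -/
noncomputable def sT (T : Set (List ℕ)) (w : List ℕ) : List ℕ := sTaux T w [] []

/-- `w` is a permutation of `{1, …, w.length}`. -/
def IsPermList (w : List ℕ) : Prop := w.Perm (List.range' 1 w.length)

/-- `T` is reduced: no element of `T` contains another element of `T`. -/
def Reduced (T : Set (List ℕ)) : Prop :=
  ∀ σ ∈ T, ∀ τ ∈ T, σ ≠ τ → ¬ Contains σ τ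

/-- `σ̂`: swap the first two entries of `σ`. -/
def hat : List ℕ → List ℕ
  | a :: b :: t => b :: a :: t
  | l => l

/-- `is` is (the list of 0-based indices of) an occurrence in `π` of the reverse of
some pattern in `T`. -/
def IsOcc (T : Set (List ℕ)) (π : List ℕ) (is : List ℕ) : Prop :=
  is.Chain' (· < ·) ∧ (∀ i ∈ is, i < π.length) ∧
    ∃ σ ∈ T, OrdIso (is.map (fun i => π.getD i 0)) σ.reverse

/-- Colexicographic (non-strict) order on index tuples. -/
def ColexLe (u v : List ℕ) : Prop := u = v ∨ List.Lex (· < ·) u.reverse v.reverse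

/-- `as = (a_0, …, a_k)` is the `T`-clumping of `π`: the blocks concatenate to `π`
and the indices of the first entries of `a_1, …, a_k` form the colexicographically
least occurrence in `π` of the reverse of a pattern of `T`. -/
def IsClumping (T : Set (List ℕ)) (π : List ℕ) (as : List (List ℕ)) : Prop :=
  as.flatten = π ∧ 2 ≤ as.length ∧
  IsOcc T π ((List.range (as.length - 1)).map (fun i => ((as.take (i + 1)).flatten).length)) ∧
  ∀ js, IsOcc T π js →
    ColexLe ((List.range (as.length - 1)).map (fun i => ((as.take (i + 1)).flatten).length)) js


-- ===== auxiliary lemmas =====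

theorem chain'_iff_pairwise {α : Type*} {R : α → α → Prop} [Trans R R R] {l : List α} :
    Chain' R l ↔ Pairwise R l :=
  Iff.rfl.trans List.isChain_iff_pairwise

lemma shift_map_getD (a : ℕ) (w' : List ℕ) (is : List ℕ) (h : ∀ i ∈ is, 0 < i) :
    is.map (fun i => (a :: w').getD i 0) = (is.map (fun i => i - 1)).map (fun i => w'.getD i 0) := by
  rw [List.map_map]
  refine List.map_congr_left ?_
  intro j hj
  have := h j hj
  obtain ⟨m, rfl⟩ : ∃ m, j = m + 1 := ⟨j - 1, by omega⟩
  simp [Function.comp]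

lemma sublist_of_indices : ∀ (w : List ℕ) (is : List ℕ), is.Chain' (· < ·) →
    (∀ i ∈ is, i < w.length) → (is.map (fun i => w.getD i 0)).Sublist w := by
  intro w
  induction w with
  | nil => intro is _ hb; cases is with
    | nil => simp
    | cons i is => exact absurd (hb i (by simp)) (by simp)
  | cons a w' ih =>
    intro is hch hb
    cases is with
    | nil => simp
    | cons i is =>
      have hpw : Pairwise (· < ·) (i :: is) := chain'_iff_pairwise.mp hch
      have hlt : ∀ j ∈ is, i < j := (pairwise_cons.mp hpw).1
      have hch' : Chain' (· < ·) (is.map (fun j => j - 1)) := by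
        rw [chain'_iff_pairwise] at hch ⊢
        rw [List.pairwise_map]
        refine (pairwise_cons.mp hch).2.imp_of_mem ?_
        intro x y hx _ hxy
        have := hlt x hx
        omega
      have hb' : ∀ j ∈ is.map (fun j => j - 1), j < w'.length := by
        intro j hj
        simp only [List.mem_map] at hj
        obtain ⟨b, hb2, rfl⟩ := hj
        have h1 := hb b (by simp [hb2])
        have h2 := hlt b hb2
        simp at h1; omega
      by_cases hzero : i = 0
      · subst hzero
        have hmap : (0 :: is).map (fun j => (a :: w').getD j 0)
            = a :: (is.map (fun j => j - 1)).map (fun j => w'.getD j 0) := by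
          rw [List.map_cons, ← shift_map_getD a w' is (fun j hj => hlt j hj)]
          simp
        rw [hmap]
        exact Sublist.cons₂ _ (ih _ hch' hb')
      · have hpos : ∀ j ∈ i :: is, 0 < j := by
          intro j hj
          rcases List.mem_cons.mp hj with rfl | hj
          · omega
          · have := hlt j hj; omega
        have hch'' : Chain' (· < ·) ((i :: is).map (fun j => j - 1)) := by
          rw [chain'_iff_pairwise] at hch ⊢
          rw [List.pairwise_map]
          refine hch.imp_of_mem ?_
          intro x y hx _ hxy
          have := hpos x hx
          omega
        have hb'' : ∀ j ∈ (i :: is).map (fun j => j - 1), j < w'.length := by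
          intro j hj
          simp only [List.mem_map] at hj
          obtain ⟨b, hb2, rfl⟩ := hj
          have := hb b hb2
          simp at this
          have := hpos b hb2
          omega
        rw [shift_map_getD a w' _ hpos]
        exact Sublist.cons _ (ih _ hch'' hb'')

lemma indices_of_sublist : ∀ {u w : List ℕ}, u.Sublist w →
    ∃ is : List ℕ, is.Chain' (· < ·) ∧ (∀ i ∈ is, i < w.length) ∧
      u = is.map (fun i => w.getD i 0) := by
  intro u w h
  induction h with
  | slnil => exact ⟨[], List.IsChain.nil, by simp, by simp⟩
  | @cons l₁ l₂ a _ ih =>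
    obtain ⟨is, hch, hb, heq⟩ := ih
    refine ⟨is.map (· + 1), ?_, ?_, ?_⟩
    · rw [chain'_iff_pairwise] at hch ⊢
      rw [List.pairwise_map]
      exact hch.imp (by omega)
    · intro j hj; simp only [List.mem_map] at hj
      obtain ⟨b, hb', rfl⟩ := hj
      have := hb b hb'; simp; omega
    · rw [List.map_map, heq]
      refine List.map_congr_left ?_
      intro j _; simp [Function.comp]
  | @cons_cons l₁ l₂ a _ ih =>
    obtain ⟨is, hch, hb, heq⟩ := ih
    refine ⟨0 :: is.map (· + 1), ?_, ?_, ?_⟩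
    · rw [chain'_iff_pairwise] at hch ⊢
      rw [List.pairwise_cons, List.pairwise_map]
      constructor
      · intro b hb'; simp only [List.mem_map] at hb'; omega
      · exact hch.imp (by omega)
    · intro j hj
      simp only [List.mem_cons, List.mem_map] at hj
      rcases hj with rfl | ⟨b, hb', rfl⟩
      · simp
      · have := hb b hb'; simp; omega
    · simp only [List.map_cons, List.getD_cons_zero, List.map_map]
      rw [heq]
      congr 1

lemma sTaux_nil (T : Set (List ℕ)) (s o : List ℕ) : sTaux T [] s o = o ++ s := by
  rw [sTaux.eq_def]

lemma sTaux_push (T : Set (List ℕ)) {x : ℕ} {s : List ℕ} (rest o : List ℕ)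
    (h : AvoidsSet T (x :: s)) : sTaux T (x :: rest) s o = sTaux T rest (x :: s) o := by
  rw [sTaux.eq_def]; simp [h]

lemma sTaux_push_empty (T : Set (List ℕ)) {x : ℕ} (rest o : List ℕ)
    (h : ¬ AvoidsSet T [x]) : sTaux T (x :: rest) [] o = sTaux T rest [x] o := by
  rw [sTaux.eq_def]; simp [h]

lemma sTaux_pop (T : Set (List ℕ)) {x y : ℕ} {s : List ℕ} (rest o : List ℕ)
    (h : ¬ AvoidsSet T (x :: y :: s)) :
    sTaux T (x :: rest) (y :: s) o = sTaux T (x :: rest) s (o ++ [y]) := by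
  rw [sTaux.eq_def]; simp [h]

lemma sTaux_out (T : Set (List ℕ)) : ∀ n inp s o, 2 * inp.length + s.length ≤ n →
    sTaux T inp s o = o ++ sTaux T inp s [] := by
  intro n
  induction n using Nat.strong_induction_on with
  | _ n ih =>
    intro inp s o hle
    match inp with
    | [] => rw [sTaux_nil, sTaux_nil]; simp
    | x :: rest =>
      simp only [List.length_cons] at hle
      by_cases h : AvoidsSet T (x :: s)
      · rw [sTaux_push T rest o h, sTaux_push T rest [] h]
        exact ih (2 * rest.length + (x :: s).length) (by simp; omega) _ _ _ le_rfl
      · cases s with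
        | nil =>
          rw [sTaux_push_empty T rest o h, sTaux_push_empty T rest [] h]
          exact ih (2 * rest.length + 1) (by omega) _ _ _ (by simp)
        | cons y s' =>
          rw [sTaux_pop T rest o h, sTaux_pop T rest [] h]
          simp only [List.length_cons] at hle
          have h1 := ih (2 * (x :: rest).length + s'.length) (by simp; omega) (x :: rest) s' (o ++ [y]) le_rfl
          have h2 := ih (2 * (x :: rest).length + s'.length) (by simp; omega) (x :: rest) s' ([] ++ [y]) le_rfl
          rw [h1, h2]
          simp

lemma sTaux_out' (T : Set (List ℕ)) (inp s o : List ℕ) :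
    sTaux T inp s o = o ++ sTaux T inp s [] :=
  sTaux_out T _ inp s o le_rfl

lemma push_run (T : Set (List ℕ)) : ∀ (p q s o : List ℕ),
    (∀ m, m < p.length → AvoidsSet T ((p.take (m+1)).reverse ++ s)) →
    sTaux T (p ++ q) s o = sTaux T q (p.reverse ++ s) o := by
  intro p
  induction p with
  | nil => intro q s o _; simp
  | cons a p ih =>
    intro q s o hcond
    have h0 : AvoidsSet T (a :: s) := by
      have := hcond 0 (by simp)
      simpa using this
    rw [List.cons_append, sTaux_push T _ o h0]
    rw [ih q (a :: s) o ?_]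
    · simp
    · intro m hm
      have := hcond (m+1) (by simp; omega)
      simp only [List.take_succ_cons, List.reverse_cons, List.append_assoc] at this
      simpa using this

lemma pop_run (T : Set (List ℕ)) : ∀ (u : List ℕ) (x : ℕ) (q s o : List ℕ),
    (∀ j, j < u.length → ¬ AvoidsSet T (x :: (u.drop j ++ s))) →
    sTaux T (x :: q) (u ++ s) o = sTaux T (x :: q) s (o ++ u) := by
  intro u
  induction u with
  | nil => intro x q s o _; simp
  | cons y u ih =>
    intro x q s o hcond
    have h0 : ¬ AvoidsSet T (x :: (y :: (u ++ s))) := by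
      have := hcond 0 (by simp)
      simpa using this
    rw [List.cons_append, sTaux_pop T _ o h0]
    rw [ih x q s (o ++ [y]) ?_]
    · simp
    · intro j hj
      have := hcond (j+1) (by simp; omega)
      simpa using this

lemma ordIso_reverse {u v : List ℕ} (h : OrdIso u v) : OrdIso u.reverse v.reverse := by
  obtain ⟨hlen, hiso⟩ := h
  refine ⟨by simp [hlen], ?_⟩
  intro i j hi hj
  simp only [List.length_reverse] at hi hj
  have e : ∀ (l : List ℕ) (m : ℕ), m < l.length →
      l.reverse.getD m 0 = l.getD (l.length - 1 - m) 0 := by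
    intro l m hm
    rw [List.getD_eq_getElem _ 0 (by simp [hm]), List.getD_eq_getElem _ 0 (by omega)]
    simp [List.getElem_reverse]
  rw [e u i hi, e u j hj, e v i (hlen ▸ hi), e v j (hlen ▸ hj)]
  rw [hlen]
  exact hiso _ _ (by omega) (by omega)

lemma contains_reverse {w p : List ℕ} (h : Contains w p) : Contains w.reverse p.reverse := by
  obtain ⟨u, hsub, hiso⟩ := h
  exact ⟨u.reverse, hsub.reverse, ordIso_reverse hiso⟩

/-- The recursion for `s_T` via the `T`-clumping `(a_0, …, a_k)`:
`s_T(π) = a_{k-1}^r · s_T(a_0 ⋯ a_{k-2} a_k)`. -/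
theorem stmt2 (T : Set (List ℕ)) (π : List ℕ) (hπ : IsPermList π)
    (as : List (List ℕ)) (hclump : IsClumping T π as) :
    sT T π = (as.getD (as.length - 2) []).reverse ++
      sT T ((as.take (as.length - 2)).flatten ++ as.getD (as.length - 1) []) := by
  obtain ⟨hjoin, hn, hocc, hmin⟩ := hclump
  set n := as.length with hn_def
  set f : ℕ → ℕ := fun i => ((as.take (i + 1)).flatten).length with hf
  set A := (as.take (n-2)).flatten with hA
  set B := as.getD (n-2) [] with hB
  set C := as.getD (n-1) [] with hC
  set c := (List.range (n-1)).map f with hc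
  set lA := A.length with hlA
  set lB := B.length with hlB
  -- structural decomposition
  have hBel : B = as[n-2]'(by omega) := List.getD_eq_getElem as [] (by omega)
  have hCel : C = as[n-1]'(by omega) := List.getD_eq_getElem as [] (by omega)
  have hdrop : as.drop (n-2) = [B, C] := by
    rw [hBel, hCel]
    rw [List.drop_eq_getElem_cons (show n-2 < as.length by omega)]
    rw [show n-2+1 = n-1 by omega]
    rw [List.drop_eq_getElem_cons (show n-1 < as.length by omega)]
    rw [List.drop_eq_nil_of_le (by omega)]
  have hsplit : as = as.take (n-2) ++ [B, C] := by rw [← hdrop, List.take_append_drop]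
  have hπ1 : π = A ++ (B ++ C) := by
    rw [← hjoin]
    conv_lhs => rw [hsplit]
    simp [hA]
  have hπ2 : π = (A ++ B) ++ C := by rw [hπ1, List.append_assoc]
  have hDlen : (as.take (n-2)).length = n-2 := by
    rw [List.length_take]; omega
  have hfA : ∀ j, j < n-2 → f j ≤ lA := by
    intro j hj
    have h1 : as.take (j+1) = (as.take (n-2)).take (j+1) := by
      rw [List.take_take]; congr 1; omega
    have h2 : A = (as.take (j+1)).flatten ++ ((as.take (n-2)).drop (j+1)).flatten := by
      rw [h1, ← List.flatten_append, List.take_append_drop]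
    have : lA = f j + ((as.take (n-2)).drop (j+1)).flatten.length := by
      rw [hlA, h2]; simp [hf]
    omega
  have hfn2 : f (n-2) = lA + lB := by
    have htk : as.take (n-2+1) = as.take (n-2) ++ [B] := by
      conv_lhs => rw [hsplit]
      rw [show n-2+1 = (as.take (n-2)).length + 1 by rw [hDlen]]
      rw [List.take_append]
      simp
    show ((as.take (n-2+1)).flatten).length = lA + lB
    rw [htk, List.flatten_append, List.length_append, ← hA]
    simp [hlA, hlB]
  have hcsplit : c = (List.range (n-2)).map f ++ [lA + lB] := by
    rw [hc, show n-1 = (n-2)+1 by omega, List.range_succ, List.map_append]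
    simp [hfn2]
  set c' := (List.range (n-2)).map f with hc'
  have hc'le : ∀ i ∈ c', i ≤ lA := by
    intro i hi
    rw [hc'] at hi
    simp only [List.mem_map, List.mem_range] at hi
    obtain ⟨j, hj, rfl⟩ := hi
    exact hfA j hj
  obtain ⟨hch, hbd, σ, hσT, hiso⟩ := hocc
  have hmemc : lA + lB ∈ c := by rw [hcsplit]; simp
  have hπlen : lA + lB < π.length := hbd _ hmemc
  have hlenπ : π.length = lA + lB + C.length := by rw [hπ2]; simp; omega
  have hCne : C ≠ [] := by
    intro h; rw [h] at hlenπ; simp at hlenπ; omega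
  set x := π.getD (lA + lB) 0 with hx
  have hxC : C = x :: C.tail := by
    have e1 : x = C.head hCne := by
      rw [hx, List.getD_eq_getElem _ 0 hπlen]
      have e2 : π[lA+lB]'hπlen = ((A++B)++C)[lA+lB]'(hπ2 ▸ hπlen) := by
        exact List.getElem_of_eq hπ2 _
      rw [e2, List.getElem_append_right (by simp [hlA, hlB] : (A++B).length ≤ lA+lB)]
      have : lA + lB - (A++B).length = 0 := by simp [hlA, hlB]
      simp only [this]
      exact List.getElem_zero _
    rw [e1, List.cons_head_tail]
  have hgdt : ∀ (t i : ℕ), i < t → i < π.length → (π.take t).getD i 0 = π.getD i 0 := by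
    intro t i hit hiπ
    rw [List.getD_eq_getElem _ 0 (by simp [List.length_take]; omega),
        List.getD_eq_getElem _ 0 hiπ]
    exact List.getElem_take
  -- minimality consequences
  have M1 : ∀ js, IsOcc T π js → ∀ t, (∀ i ∈ js, i < t) → t ≤ lA + lB → False := by
    intro js hjs t hlt hle
    have hcolex : c = js ∨ List.Lex (· < ·) c.reverse js.reverse := hmin js hjs
    rcases hcolex with heq | hlex
    · have hm : lA + lB ∈ js := heq ▸ hmemc
      have := hlt _ hm; omega
    · have hcr : c.reverse = (lA+lB) :: c'.reverse := by rw [hcsplit]; simp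
      rw [hcr] at hlex
      cases hjsr : js.reverse with
      | nil => rw [hjsr] at hlex; cases hlex
      | cons b bs =>
        rw [hjsr] at hlex
        have hbmem : b ∈ js := by
          have : b ∈ js.reverse := by rw [hjsr]; simp
          simpa using this
        have hbt := hlt b hbmem
        cases hlex with
        | cons h => omega
        | rel h => omega
  have M3 : ∀ t, t ≤ lA + lB → AvoidsSet T ((π.take t).reverse) := by
    intro t ht p hp hcont
    have h2 : Contains (π.take t) p.reverse := by
      have := contains_reverse hcont
      simpa using this
    obtain ⟨u, hsub, hiso2⟩ := h2
    obtain ⟨is, hch2, hbd2, rfl⟩ := indices_of_sublist hsub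
    have hbd3 : ∀ i ∈ is, i < t := by
      intro i hi; have := hbd2 i hi; simp [List.length_take] at this; omega
    have hbd4 : ∀ i ∈ is, i < π.length := by
      intro i hi; have := hbd3 i hi; omega
    refine M1 is ⟨hch2, hbd4, p, hp, ?_⟩ t hbd3 ht
    have hme : is.map (fun i => π.getD i 0) = is.map (fun i => (π.take t).getD i 0) :=
      List.map_congr_left (fun i hi => (hgdt t i (hbd3 i hi) (hbd4 i hi)).symm)
    rw [hme]; exact hiso2
  have M2 : ∀ t, lA < t → t ≤ lA + lB → ¬ AvoidsSet T (x :: (π.take t).reverse) := by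
    intro t h1 h2 hav
    refine hav σ hσT ?_
    have hmapc : c.map (fun i => π.getD i 0)
        = c'.map (fun i => π.getD i 0) ++ [x] := by
      rw [hcsplit]; simp [hx]
    have hmapc' : c'.map (fun i => π.getD i 0)
        = c'.map (fun i => (π.take t).getD i 0) := by
      refine List.map_congr_left ?_
      intro i hi
      have hile := hc'le i hi
      exact (hgdt t i (by omega) (by omega)).symm
    have hch3 : Chain' (· < ·) c' := hch.sublist (by
      rw [hcsplit]; exact List.sublist_append_left _ _)
    have hbd5 : ∀ i ∈ c', i < (π.take t).length := by
      intro i hi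
      have := hc'le i hi
      simp only [List.length_take]
      omega
    have hsub2 : (c'.map (fun i => (π.take t).getD i 0)).Sublist (π.take t) :=
      sublist_of_indices _ _ hch3 hbd5
    have hsub3 : ((c.map (fun i => π.getD i 0)).reverse).Sublist
        (x :: (π.take t).reverse) := by
      rw [hmapc]
      rw [List.reverse_append]
      simp only [List.reverse_cons, List.reverse_nil, List.nil_append, List.singleton_append]
      exact Sublist.cons₂ x (by rw [hmapc']; exact hsub2.reverse)
    refine ⟨(c.map (fun i => π.getD i 0)).reverse, hsub3, ?_⟩
    have := ordIso_reverse hiso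
    simpa using this
  -- assembling the run of the machine
  have cond1 : ∀ m, m < (A++B).length → AvoidsSet T (((A++B).take (m+1)).reverse ++ []) := by
    intro m hm
    simp only [List.length_append] at hm
    rw [List.append_nil]
    have he : π.take (m+1) = (A++B).take (m+1) := by
      rw [hπ2]; exact List.take_append_of_le_length (by simp; omega)
    rw [← he]
    exact M3 (m+1) (by omega)
  have cond2 : ∀ m, m < A.length → AvoidsSet T ((A.take (m+1)).reverse ++ []) := by
    intro m hm
    rw [List.append_nil]
    have he : π.take (m+1) = A.take (m+1) := by
      rw [hπ1]; exact List.take_append_of_le_length (by omega)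
    rw [← he]
    exact M3 (m+1) (by omega)
  have cond3 : ∀ j, j < B.reverse.length → ¬ AvoidsSet T (x :: (B.reverse.drop j ++ A.reverse)) := by
    intro j hj
    simp only [List.length_reverse] at hj
    have e1 : B.reverse.drop j = (B.take (lB - j)).reverse := by
      rw [List.reverse_take]
      congr 1
      omega
    have e2 : (B.take (lB - j)).reverse ++ A.reverse = (π.take (lA + (lB - j))).reverse := by
      rw [← List.reverse_append]
      congr 1
      rw [hπ1]
      rw [show lA + (lB - j) = A.length + (lB - j) from rfl, List.take_length_add_append]
      congr 1
      rw [List.take_append_of_le_length (by omega)]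
    rw [e1, e2]
    exact M2 (lA + (lB - j)) (by omega) (by omega)
  have step1 : sT T π = sTaux T C ((A++B).reverse) [] := by
    show sTaux T π [] [] = _
    rw [show π = (A++B) ++ C from hπ2]
    rw [push_run T (A++B) C [] [] cond1]
    simp
  have step2 : sTaux T C ((A++B).reverse) [] = B.reverse ++ sTaux T C A.reverse [] := by
    conv_lhs => rw [hxC]
    rw [List.reverse_append]
    rw [pop_run T B.reverse x C.tail A.reverse [] cond3]
    rw [sTaux_out']
    rw [← hxC]
    simp
  have step3 : sT T (A ++ C) = sTaux T C A.reverse [] := by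
    show sTaux T (A ++ C) [] [] = _
    rw [push_run T A C [] [] cond2]
    simp
  rw [step1, step2, ← step3]
end

section
/- Let τ be a non-identity permutation of length at least 3. A permutation π of length n satisfies s_{213,τ}(π) = identity if and only if π = n·ρ where ρ is a 231-avoiding permutation of {1,…,n−1}; in particular the number of such π is C_{n−1}. -/
open List

attribute [local instance] Classical.propDecidable

/-! ### Auxiliary lemmas -/

section Patterns

lemma length_three_cases {u : List ℕ} (h : u.length = 3) : ∃ x y z, u = [x,y,z] := by
  match u, h with
  | [x,y,z], _ => exact ⟨x,y,z,rfl⟩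

lemma contains_231 {w : List ℕ} :
    Contains w [2,3,1] ↔ ∃ x y z, [x,y,z].Sublist w ∧ z < x ∧ x < y := by
  constructor
  · rintro ⟨u, hsub, hlen, hcmp⟩
    obtain ⟨x,y,z,rfl⟩ := length_three_cases hlen
    refine ⟨x,y,z,hsub, ?_, ?_⟩
    · have := hcmp 2 0 (by norm_num) (by norm_num); simpa using this
    · have := hcmp 0 1 (by norm_num) (by norm_num); simpa using this
  · rintro ⟨x,y,z,hsub,h1,h2⟩
    refine ⟨[x,y,z], hsub, rfl, ?_⟩
    intro i j hi hj
    simp only [List.length_cons, List.length_nil] at hi hj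
    interval_cases i <;> interval_cases j <;> simp <;> omega

lemma contains_213 {w : List ℕ} :
    Contains w [2,1,3] ↔ ∃ x y z, [x,y,z].Sublist w ∧ y < x ∧ x < z := by
  constructor
  · rintro ⟨u, hsub, hlen, hcmp⟩
    obtain ⟨x,y,z,rfl⟩ := length_three_cases hlen
    refine ⟨x,y,z,hsub, ?_, ?_⟩
    · have := hcmp 1 0 (by norm_num) (by norm_num); simpa using this
    · have := hcmp 0 2 (by norm_num) (by norm_num); simpa using this
  · rintro ⟨x,y,z,hsub,h1,h2⟩
    refine ⟨[x,y,z], hsub, rfl, ?_⟩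
    intro i j hi hj
    simp only [List.length_cons, List.length_nil] at hi hj
    interval_cases i <;> interval_cases j <;> simp <;> omega

lemma contains_mono {u w p : List ℕ} (h : u.Sublist w) (hc : Contains u p) : Contains w p := by
  obtain ⟨v, hv, hiso⟩ := hc; exact ⟨v, hv.trans h, hiso⟩

lemma contains_length {w p : List ℕ} (h : Contains w p) : p.length ≤ w.length := by
  obtain ⟨u, hu, hlen, _⟩ := h
  exact hlen ▸ hu.length_le

lemma avoids_short {T : Set (List ℕ)} (h : ∀ p ∈ T, 3 ≤ p.length) {w : List ℕ}
    (hw : w.length ≤ 2) : AvoidsSet T w := by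
  intro p hp hc
  have := contains_length hc
  have := h p hp
  omega

lemma sorted_avoids_nonid {w τ : List ℕ} (hw : Pairwise (·<·) w)
    (hτ : τ.Perm (List.range' 1 τ.length)) (hτid : τ ≠ List.range' 1 τ.length) :
    ¬ Contains w τ := by
  rintro ⟨u, hsub, hlen, hcmp⟩
  apply hτid
  have hu : Pairwise (·<·) u := hw.sublist hsub
  have hτs : Pairwise (·<·) τ := by
    rw [pairwise_iff_getElem]
    intro i j hi hj hij
    rw [← hlen] at hi hj
    have := (hcmp i j hi hj).mp
    rw [getD_eq_getElem _ _ hi, getD_eq_getElem _ _ hj,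
      getD_eq_getElem _ _ (hlen ▸ hi), getD_eq_getElem _ _ (hlen ▸ hj)] at this
    exact this (pairwise_iff_getElem.mp hu i j hi hj hij)
  exact Perm.eq_of_pairwise (fun a b _ _ h1 h2 => absurd (h1.trans h2) (lt_irrefl _)) hτs (pairwise_lt_range' 1 (by omega)) hτ

lemma sorted_avoids_213 {w : List ℕ} (hw : Pairwise (·<·) w) : ¬ Contains w [2,1,3] := by
  rw [contains_213]
  rintro ⟨x,y,z,hsub,h1,h2⟩
  have : Pairwise (·<·) [x,y,z] := hw.sublist hsub
  simp [pairwise_cons] at this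
  omega

lemma contains_231_append {L R : List ℕ} {M : ℕ} (hL : ∀ x ∈ L, x < M) (hR : ∀ x ∈ R, x < M)
    (h : Contains (L ++ M :: R) [2,3,1]) :
    Contains L [2,3,1] ∨ Contains R [2,3,1] ∨ ∃ a ∈ L, ∃ b ∈ R, b < a := by
  rw [contains_231] at h
  obtain ⟨x, y, z, hsub, hzx, hxy⟩ := h
  rw [sublist_append_iff] at hsub
  obtain ⟨l₁, l₂, heq, h1, h2⟩ := hsub
  rcases l₁ with _ | ⟨a, _ | ⟨b, _ | ⟨c, rest⟩⟩⟩
  · simp only [nil_append] at heq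
    subst heq
    rw [sublist_cons_iff] at h2
    rcases h2 with h2 | ⟨rr, heq2, hrr⟩
    · exact Or.inr (Or.inl (contains_231.mpr ⟨x,y,z,h2,hzx,hxy⟩))
    · injection heq2 with e1 e2
      subst e1
      have hy : y ∈ R := hrr.subset (e2 ▸ (by simp : y ∈ [y,z]))
      have := hR y hy
      omega
  · injection heq with e1 e2
    subst e1; subst e2
    rw [sublist_cons_iff] at h2
    rcases h2 with h2 | ⟨rr, heq2, hrr⟩
    · exact Or.inr (Or.inr ⟨x, h1.subset (by simp), z, h2.subset (by simp), hzx⟩)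
    · injection heq2 with e1 e2
      exact Or.inr (Or.inr ⟨x, h1.subset (by simp), z,
        hrr.subset (e2 ▸ (by simp : z ∈ [z])), hzx⟩)
  · injection heq with e1 heq'; injection heq' with e2 e3
    subst e1; subst e2; subst e3
    rw [sublist_cons_iff] at h2
    rcases h2 with h2 | ⟨rr, heq2, hrr⟩
    · exact Or.inr (Or.inr ⟨x, h1.subset (by simp), z, h2.subset (by simp), hzx⟩)
    · injection heq2 with e1 e2
      have := hL x (h1.subset (by simp))
      omega
  · injection heq with e1 heq'; injection heq' with e2 heq''; injection heq'' with e3 e4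
    subst e1; subst e2; subst e3
    have : rest = [] := by
      cases rest with
      | nil => rfl
      | cons d t => simp at e4
    subst this

    exact Or.inl (contains_231.mpr ⟨x,y,z,h1,hzx,hxy⟩)

end Patterns

section Machine


def run : List ℕ → List ℕ → List ℕ × List ℕ
  | [], st => ([], st)
  | x :: r, [] => run r [x]
  | x :: r, y :: s =>
    if x < y then run r (x :: y :: s)
    else
      let p := run (x :: r) s
      (y :: p.1, p.2)
termination_by input st => 2 * input.length + st.length
decreasing_by all_goals simp_wf <;> omega

lemma run_perm (input st : List ℕ) : (run input st).1 ++ (run input st).2 ~ input ++ st := by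
  induction input, st using run.induct with
  | case1 st => simp [run]
  | case2 x r ih =>
      simp only [run]
      refine ih.trans ?_
      simpa using perm_append_singleton x r
  | case3 x r y s h ih =>
      simp only [run, if_pos h]
      refine ih.trans ?_
      simpa using (perm_middle (a:=x) (l₁:=r) (l₂:=y::s)).symm
  | case4 x r y s h ih =>
      simp only [run, if_neg h]
      refine (Perm.cons y ih).trans ?_
      simpa using (Perm.swap x y _).trans (Perm.cons x (perm_middle (a:=y) (l₁:=r) (l₂:=s)).symm)

lemma run_append (L M st : List ℕ) :
    run (L ++ M) st = ((run L st).1 ++ (run M (run L st).2).1, (run M (run L st).2).2) := by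
  induction L, st using run.induct with
  | case1 st => simp [run]
  | case2 x r ih => simp only [cons_append, run] at ih ⊢; rw [ih]
  | case3 x r y s h ih => simp only [cons_append, run, if_pos h] at ih ⊢; rw [ih]
  | case4 x r y s h ih =>
      simp only [cons_append, run, if_neg h] at ih ⊢
      rw [ih]

lemma run_floor (input st : List ℕ) (b : ℕ) (hin : ∀ x ∈ input, x < b)
    (hst : ∀ y ∈ st, y < b) :
    run input (st ++ [b]) = ((run input st).1, (run input st).2 ++ [b]) := by
  induction input, st using run.induct with
  | case1 st => simp [run]
  | case2 x r ih =>
      have hxb : x < b := hin x (by simp)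
      have ih' := ih (fun z hz => hin z (mem_cons_of_mem _ hz)) (by simpa using hxb)
      simp only [cons_append, nil_append] at ih' ⊢
      simp only [run, if_pos hxb]
      exact ih'
  | case3 x r y s h ih =>
      have hxb : x < b := hin x (by simp)
      have hstack : ∀ z ∈ x :: y :: s, z < b := by
        intro z hz
        simp only [mem_cons] at hz
        rcases hz with rfl | hz
        · exact hxb
        · exact hst z (by simp [hz])
      have ih' := ih (fun z hz => hin z (mem_cons_of_mem _ hz)) hstack
      simp only [cons_append] at ih' ⊢
      simp only [run, if_pos h]
      exact ih'
  | case4 x r y s h ih =>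
      have ih' := ih hin (fun z hz => hst z (mem_cons_of_mem _ hz))
      simp only [cons_append] at ih' ⊢
      simp only [run, if_neg h]
      rw [ih']

lemma run_max (R st : List ℕ) (M : ℕ) (hst : ∀ y ∈ st, y < M) :
    run (M :: R) st = (st ++ (run R [M]).1, (run R [M]).2) := by
  induction st with
  | nil => simp [run]
  | cons y s ih =>
      have : ¬ M < y := by have := hst y (by simp); omega
      simp only [run, if_neg this]
      rw [ih (fun z hz => hst z (by simp [hz]))]
      simp

def outS (w : List ℕ) : List ℕ := (run w []).1 ++ (run w []).2

lemma outS_perm (w : List ℕ) : outS w ~ w := by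
  simpa [outS] using run_perm w []

lemma outS_decomp (L R : List ℕ) (M : ℕ) (hL : ∀ x ∈ L, x < M) (hR : ∀ x ∈ R, x < M) :
    outS (L ++ M :: R) = outS L ++ outS R ++ [M] := by
  unfold outS
  rw [run_append L (M :: R) []]
  have hstL : ∀ y ∈ (run L []).2, y < M := by
    intro y hy
    have : y ∈ L ++ [] := (run_perm L []).subset (by simp [hy])
    exact hL y (by simpa using this)
  rw [run_max R (run L []).2 M hstL]
  rw [show [M] = [] ++ [M] from rfl, run_floor R [] M hR (by simp)]
  simp [append_assoc]

lemma sTaux_ends {T : Set (List ℕ)} (hT3 : ∀ p ∈ T, 3 ≤ p.length) :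
    ∀ N input st out b, 2 * input.length + st.length ≤ N →
      ∃ z, sTaux T input (st ++ [b]) out = z ++ [b] := by
  intro N
  induction N with
  | zero =>
      intro input st out b hle
      match input with
      | [] => exact ⟨out ++ st, by rw [sTaux.eq_def]; simp⟩
      | x :: rest => simp at hle
  | succ N ih =>
      intro input st out b hle
      match input with
      | [] => exact ⟨out ++ st, by rw [sTaux.eq_def]; simp⟩
      | x :: rest =>
          by_cases h : AvoidsSet T (x :: (st ++ [b]))
          · rw [sTaux.eq_def]
            simp only [if_pos h]
            have := ih rest (x :: st) out b (by simp at hle ⊢; omega)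
            simpa using this
          · rw [sTaux.eq_def]
            simp only [if_neg h]
            match st with
            | [] => exact absurd (avoids_short hT3 (by simp)) h
            | y :: s =>
                exact ih (x :: rest) s (out ++ [y]) b (by simp at hle ⊢; omega)

lemma sTaux_sim {T : Set (List ℕ)} (hT3 : ∀ p ∈ T, 3 ≤ p.length)
    (h213 : [2,1,3] ∈ T)
    (hTs : ∀ w : List ℕ, Pairwise (·<·) w → AvoidsSet T w) :
    ∀ N input st out b, 2 * input.length + st.length ≤ N →
      (∀ x ∈ input, x < b) → (∀ x ∈ input, x ∉ st) → input.Nodup →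
      Pairwise (·<·) (st ++ [b]) →
      sTaux T input (st ++ [b]) out = out ++ (run input st).1 ++ ((run input st).2 ++ [b]) := by
  intro N
  induction N with
  | zero =>
      intro input st out b hle
      match input with
      | [] => intro _ _ _ _; rw [sTaux.eq_def]; simp [run]
      | x :: rest => simp at hle
  | succ N ih =>
      intro input st out b hle hlt hnotin hnd hsort
      match input with
      | [] => rw [sTaux.eq_def]; simp [run]
      | x :: rest =>
          have hxb : x < b := hlt x (by simp)
          match st with
          | [] =>
              have hav : AvoidsSet T (x :: ([] ++ [b])) := avoids_short hT3 (by simp)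
              rw [sTaux.eq_def]
              simp only [if_pos hav]
              have := ih rest [x] out b (by simp at hle ⊢; omega)
                (fun z hz => hlt z (by simp [hz]))
                (by intro z hz
                    simp only [mem_singleton]
                    exact fun e => (nodup_cons.mp hnd).1 (e ▸ hz))
                (nodup_cons.mp hnd).2
                (by simp [hxb])
              simp only [nil_append] at this ⊢
              rw [show sTaux T rest [x, b] out = sTaux T rest ([x] ++ [b]) out from rfl, this]
              simp [run]
          | y :: s =>
              have hsort0 : Pairwise (·<·) (y :: (s ++ [b])) := by simpa using hsort
              have hs1 := pairwise_cons.mp hsort0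
              by_cases hxy : x < y
              · have hsort' : Pairwise (·<·) (x :: (y :: s ++ [b])) := by
                  rw [pairwise_cons]
                  refine ⟨?_, by simpa using hsort0⟩
                  intro z hz
                  rcases (by simpa using hz : z = y ∨ z ∈ s ++ [b]) with rfl | hz'
                  · exact hxy
                  · exact hxy.trans (hs1.1 z hz')
                have hav : AvoidsSet T (x :: (y :: s ++ [b])) := hTs _ (by simpa using hsort')
                rw [sTaux.eq_def]
                simp only [if_pos hav]
                have hrec := ih rest (x :: y :: s) out b (by simp at hle ⊢; omega)
                  (fun z hz => hlt z (by simp [hz]))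
                  (by intro z hz
                      simp only [mem_cons]
                      push_neg
                      refine ⟨fun e => (nodup_cons.mp hnd).1 (e ▸ hz), ?_⟩
                      have := hnotin z (by simp [hz])
                      simp only [mem_cons] at this
                      push_neg at this
                      exact this)
                  (nodup_cons.mp hnd).2
                  (by simpa using hsort')
                simp only [cons_append] at hrec ⊢
                rw [hrec]
                simp only [run, if_pos hxy]
              · have hyx : y < x := by
                  have hne : x ≠ y := by
                    have := hnotin x (by simp)
                    simp only [mem_cons] at this
                    push_neg at this
                    exact this.1
                  omega
                have hnav : ¬ AvoidsSet T (x :: (y :: s ++ [b])) := by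
                  intro hav
                  refine hav [2,1,3] h213 (contains_213.mpr ⟨x, y, b, ?_, hyx, hxb⟩)
                  exact Sublist.cons₂ x (Sublist.cons₂ y (by simp))
                simp only [cons_append] at hnav
                rw [sTaux.eq_def]
                simp only [cons_append, if_neg hnav]
                have hrec := ih (x :: rest) s (out ++ [y]) b (by simp at hle ⊢; omega)
                  hlt
                  (by intro z hz
                      have := hnotin z hz
                      simp only [mem_cons] at this
                      push_neg at this
                      exact this.2)
                  hnd
                  hs1.2
                rw [hrec]
                simp only [run, if_neg hxy]
                simp [append_assoc]

end Machine

section Knuth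

lemma mem_range1 {s n m : ℕ} : m ∈ List.range' s n ↔ s ≤ m ∧ m < s + n := by
  rw [List.mem_range'_1]

lemma split_range {L R : List ℕ} {s m : ℕ} (h : (L ++ R).Perm (List.range' s m))
    (hord : ∀ a ∈ L, ∀ b ∈ R, a < b) :
    L.Perm (List.range' s L.length) ∧
      R.Perm (List.range' (s + L.length) (m - L.length)) ∧ L.length ≤ m := by
  have hlen : L.length + R.length = m := by simpa using h.length_eq
  set k := L.length with hk
  have hmem : ∀ x ∈ L ++ R, s ≤ x ∧ x < s + m := by
    intro x hx
    exact mem_range1.mp (h.subset hx)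
  set p : ℕ → Bool := fun z => decide (z < s + k) with hp
  have hsplit : List.range' s m = List.range' s k ++ List.range' (s + k) (m - k) := by
    rw [show m = k + (m - k) from by omega, ← List.range'_append (s:=s) (m:=k) (n:=m-k) (step:=1)]
    simp
  have hcount : List.countP p (List.range' s m) = k := by
    rw [hsplit, List.countP_append]
    have h1 : List.countP p (List.range' s k) = k := by
      rw [List.countP_eq_length.mpr, List.length_range']
      intro a ha
      have := mem_range1.mp ha
      simp [hp]; omega
    have h2 : List.countP p (List.range' (s+k) (m-k)) = 0 := by
      rw [List.countP_eq_zero.mpr]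
      intro a ha
      have := mem_range1.mp ha
      simp [hp]; omega
    omega
  have hRbig : ∀ b ∈ R, ¬ (b < s + k) := by
    intro b hb hblt
    -- some element of L is ≥ s + k
    by_cases hall : ∀ a ∈ L, a < s + k
    · have : List.countP p (L ++ R) = k := (h.countP_eq p) ▸ hcount
      rw [List.countP_append] at this
      have hL1 : List.countP p L = k := by
        rw [List.countP_eq_length.mpr, hk]
        intro a ha; simp [hp]; exact hall a ha
      have hR1 : 0 < List.countP p R := by
        rw [List.countP_pos_iff]
        exact ⟨b, hb, by simp [hp]; omega⟩
      omega
    · push_neg at hall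
      obtain ⟨a, ha, hage⟩ := hall
      have := hord a ha b hb
      omega
  have hLsmall : ∀ a ∈ L, a < s + k := by
    have htot : List.countP p (L ++ R) = k := (h.countP_eq p) ▸ hcount
    rw [List.countP_append] at htot
    have hR0 : List.countP p R = 0 := List.countP_eq_zero.mpr (by
      intro b hb; simpa [hp] using hRbig b hb)
    have hLk : List.countP p L = L.length := by omega
    intro a ha
    have := List.countP_eq_length.mp hLk a ha
    simpa [hp] using this
  constructor
  · have := h.filter p
    rw [List.filter_append] at this
    rw [List.filter_eq_self.mpr (by intro a ha; simp [hp]; exact hLsmall a ha)] at this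
    rw [List.filter_eq_nil_iff.mpr (by intro b hb; simpa [hp] using hRbig b hb)] at this
    rw [hsplit, List.filter_append] at this
    rw [List.filter_eq_self.mpr (by
      intro a ha; have := mem_range1.mp ha; simp [hp]; omega)] at this
    rw [List.filter_eq_nil_iff.mpr (by
      intro a ha; have := mem_range1.mp ha; simp [hp]; omega)] at this
    simpa using this
  constructor
  · have := h.filter (fun z => !(p z))
    rw [List.filter_append] at this
    rw [List.filter_eq_nil_iff.mpr (by intro a ha; simp [hp]; exact hLsmall a ha)] at this
    rw [List.filter_eq_self.mpr (by intro b hb; simpa [hp] using hRbig b hb)] at this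
    rw [hsplit, List.filter_append] at this
    rw [List.filter_eq_nil_iff.mpr (by
      intro a ha; have := mem_range1.mp ha; simp [hp]; omega)] at this
    rw [List.filter_eq_self.mpr (by
      intro a ha; have := mem_range1.mp ha; simp [hp]; omega)] at this
    simpa using this
  · omega

lemma notmem_split {A B C D : List ℕ} {M : ℕ} (h : A ++ M :: B = C ++ M :: D)
    (hA : M ∉ A) (hC : M ∉ C) : A = C ∧ B = D := by
  induction A generalizing C with
  | nil =>
      cases C with
      | nil => simpa using h
      | cons c cs =>
          injection h with h1 h2
          exact absurd (h1 ▸ (List.mem_cons_self (a:=c) (l:=cs))) hC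
  | cons a as ihA =>
      cases C with
      | nil =>
          injection h with h1 h2
          exact absurd (h1 ▸ (List.mem_cons_self (a:=a) (l:=as))) (h1 ▸ hA)
      | cons c cs =>
          injection h with h1 h2
          obtain ⟨e1, e2⟩ := ihA h2 (fun hx => hA (List.mem_cons_of_mem _ hx))
            (fun hx => hC (List.mem_cons_of_mem _ hx))
          exact ⟨by rw [h1, e1], e2⟩

lemma range'_glue (s k j : ℕ) : List.range' s k ++ List.range' (s+k) j = List.range' s (k+j) := by
  simpa using List.range'_append (s:=s) (m:=k) (n:=j) (step:=1)

lemma range'_concat1 (s k : ℕ) : List.range' s (k+1) = List.range' s k ++ [s+k] := by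
  simpa using List.range'_concat (step := 1) (s:=s) (n:=k)

lemma basic_decomp {s m : ℕ} {ρ : List ℕ} (hperm : ρ.Perm (List.range' s (m+1))) :
    ∃ L R, ρ = L ++ (s+m) :: R ∧ (L ++ R).Perm (List.range' s m) ∧
      (∀ x ∈ L, x < s + m) ∧ (∀ x ∈ R, x < s + m) ∧ L.length + R.length = m := by
  have hM : (s + m) ∈ ρ := hperm.mem_iff.mpr (mem_range1.mpr ⟨by omega, by omega⟩)
  obtain ⟨L, R, rfl⟩ := List.append_of_mem hM
  have hLR : (L ++ R).Perm (List.range' s m) := by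
    have h1 : ((s+m) :: (L ++ R)).Perm (L ++ (s+m) :: R) := List.perm_middle.symm
    have h2 : (L ++ (s+m) :: R).Perm ((s+m) :: List.range' s m) := by
      refine hperm.trans ?_
      rw [range'_concat1 s m]
      exact List.perm_append_singleton _ _
    exact (h1.trans h2).cons_inv
  have hLb : ∀ x ∈ L, x < s + m := fun x hx => by
    have := mem_range1.mp (hLR.subset (List.mem_append_left _ hx)); omega
  have hRb : ∀ x ∈ R, x < s + m := fun x hx => by
    have := mem_range1.mp (hLR.subset (List.mem_append_right _ hx)); omega
  exact ⟨L, R, rfl, hLR, hLb, hRb, by simpa using hLR.length_eq⟩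

lemma decomp231 {s m : ℕ} {ρ : List ℕ} (hperm : ρ.Perm (List.range' s (m+1)))
    (hav : ¬ Contains ρ [2,3,1]) :
    ∃ L R, ρ = L ++ (s+m) :: R ∧ L.length ≤ m ∧
      L.Perm (List.range' s L.length) ∧
      R.Perm (List.range' (s + L.length) (m - L.length)) ∧
      ¬ Contains L [2,3,1] ∧ ¬ Contains R [2,3,1] := by
  obtain ⟨L, R, rfl, hLR, hLb, hRb, hlen⟩ := basic_decomp hperm
  have hnd : (L ++ R).Nodup := hLR.symm.nodup (List.nodup_range' 1 one_pos)
  have hord : ∀ a ∈ L, ∀ b ∈ R, a < b := by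
    intro a ha b hb
    by_contra hle
    have hne : a ≠ b := by
      intro rfl'
      exact (List.disjoint_of_nodup_append hnd) ha (rfl' ▸ hb)
    have hba : b < a := by omega
    apply hav
    refine contains_231.mpr ⟨a, s+m, b, ?_, hba, hLb a ha⟩
    exact (List.singleton_sublist.mpr ha).append (Sublist.cons₂ _ (List.singleton_sublist.mpr hb))
  obtain ⟨hLp, hRp, hkm⟩ := split_range hLR hord
  refine ⟨L, R, rfl, hkm, hLp, hRp, ?_, ?_⟩
  · exact fun hc => hav (contains_mono (List.sublist_append_left _ _) hc)
  · exact fun hc => hav (contains_mono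
      ((List.sublist_cons_self _ _).trans (List.sublist_append_right _ _)) hc)

lemma knuth : ∀ m s : ℕ, ∀ ρ : List ℕ, ρ.Perm (List.range' s m) →
    (outS ρ = List.range' s m ↔ ¬ Contains ρ [2,3,1]) := by
  intro m
  induction m using Nat.strong_induction_on with
  | _ m ih =>
    match m with
    | 0 =>
        intro s ρ h
        obtain rfl : ρ = [] := List.perm_nil.mp (by simpa using h)
        constructor
        · intro _ hc
          have := contains_length hc
          simp at this
        · intro _
          simp [outS, run]
    | Nat.succ m' =>
        intro s ρ hperm
        obtain ⟨L, R, rfl, hLR, hLb, hRb, hlen⟩ := basic_decomp hperm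
        have hout : outS (L ++ (s+m') :: R) = outS L ++ outS R ++ [s+m'] :=
          outS_decomp _ _ _ hLb hRb
        have hlenoL : (outS L).length = L.length := (outS_perm L).length_eq
        have hlenoR : (outS R).length = R.length := (outS_perm R).length_eq
        have hrangesplit : List.range' s (m'+1) =
            List.range' s L.length ++ (List.range' (s + L.length) (m' - L.length) ++ [s+m']) := by
          have h1 : m' + 1 = L.length + (m' + 1 - L.length) := by omega
          rw [h1, ← range'_glue s L.length (m'+1-L.length)]
          congr 1
          have h2 : m' + 1 - L.length = (m' - L.length) + 1 := by omega
          rw [h2, range'_concat1]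
          congr 2
          omega
        constructor
        · intro hid hc
          have heq : outS L ++ (outS R ++ [s+m']) =
              List.range' s L.length ++ (List.range' (s + L.length) (m' - L.length) ++ [s+m']) := by
            rw [← append_assoc, ← hout, hid, hrangesplit]
          rcases contains_231_append hLb hRb hc with hcl | hcr | ⟨a, ha, b, hb, hba⟩
          · have h1 : outS L = List.range' s L.length :=
              (List.append_inj heq (by simp [hlenoL])).1
            have hLperm : L.Perm (List.range' s L.length) :=
              (outS_perm L).symm.trans (h1 ▸ Perm.refl _)
            exact (ih L.length (by omega) s L hLperm).mp h1 hcl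
          · have h2 : outS R ++ [s+m'] =
                List.range' (s + L.length) (m' - L.length) ++ [s+m'] :=
              (List.append_inj heq (by simp [hlenoL])).2
            have h3 : outS R = List.range' (s + L.length) (m' - L.length) :=
              (List.append_inj' h2 (by simp)).1
            have hRperm : R.Perm (List.range' (s + L.length) (m' - L.length)) :=
              (outS_perm R).symm.trans (h3 ▸ Perm.refl _)
            exact (ih (m' - L.length) (by omega) _ R hRperm).mp h3 hcr
          · have hsorted : Pairwise (·<·) (outS L ++ (outS R ++ [s+m'])) := by
              rw [heq, ← hrangesplit]
              exact List.pairwise_lt_range' 1 (by omega)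
            have hab : a < b := by
              have := (List.pairwise_append.mp hsorted).2.2
              exact this a ((outS_perm L).mem_iff.mpr ha)
                b (List.mem_append_left _ ((outS_perm R).mem_iff.mpr hb))
            omega
        · intro hav
          obtain ⟨L', R', heq', hkm, hLp, hRp, hLa, hRa⟩ := decomp231 hperm hav
          -- identify L' = L, R' = R
          have hLL : L' = L ∧ R' = R := by
            have hMnotL : (s+m') ∉ L := fun hx => by have := hLb _ hx; omega
            have hMnotL' : (s+m') ∉ L' := fun hx => by
              have := mem_range1.mp (hLp.subset hx); omega
            exact notmem_split heq'.symm hMnotL' hMnotL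
          obtain ⟨e1, e2⟩ := hLL
          rw [e1] at hLp hLa
          rw [e1, e2] at hRp
          rw [e2] at hRa
          have h1 : outS L = List.range' s L.length :=
            (ih L.length (by omega) s L hLp).mpr hLa
          have h2 : outS R = List.range' (s + L.length) (m' - L.length) :=
            (ih (m' - L.length) (by omega) _ R hRp).mpr hRa
          rw [hout, h1, h2, hrangesplit, append_assoc]

end Knuth

section Counting

open BinaryTree in
noncomputable def encodeT : BinaryTree Unit → ℕ → List ℕ
  | BinaryTree.nil, _ => []
  | BinaryTree.node _ l r, s =>
      encodeT l s ++ (s + l.numNodes + r.numNodes) :: encodeT r (s + l.numNodes)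

lemma encodeT_perm (t : BinaryTree Unit) (s : ℕ) :
    (encodeT t s).Perm (List.range' s t.numNodes) := by
  induction t generalizing s with
  | nil => simp [encodeT]
  | node _ l r ihl ihr =>
      simp only [encodeT, BinaryTree.numNodes]
      have step1 : (encodeT l s ++ (s + l.numNodes + r.numNodes) :: encodeT r (s + l.numNodes)).Perm
          (List.range' s l.numNodes ++
            ((s + l.numNodes + r.numNodes) :: List.range' (s + l.numNodes) r.numNodes)) :=
        (ihl s).append ((ihr (s + l.numNodes)).cons _)
      refine step1.trans ?_
      have step2 : ((s + l.numNodes + r.numNodes) :: List.range' (s + l.numNodes) r.numNodes).Perm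
          (List.range' (s + l.numNodes) r.numNodes ++ [s + l.numNodes + r.numNodes]) :=
        (List.perm_append_singleton _ _).symm
      refine ((Perm.refl _).append step2).trans ?_
      rw [show List.range' (s + l.numNodes) r.numNodes ++ [s + l.numNodes + r.numNodes]
            = List.range' (s + l.numNodes) (r.numNodes + 1) from (range'_concat1 _ _).symm,
        range'_glue]
      rw [show l.numNodes + (r.numNodes + 1) = l.numNodes + r.numNodes + 1 from by omega]

lemma encodeT_length (t : BinaryTree Unit) (s : ℕ) : (encodeT t s).length = t.numNodes := by
  have := (encodeT_perm t s).length_eq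
  simpa using this

lemma encodeT_avoids (t : BinaryTree Unit) (s : ℕ) : ¬ Contains (encodeT t s) [2,3,1] := by
  induction t generalizing s with
  | nil =>
      intro hc
      have := contains_length hc
      simp [encodeT] at this
  | node _ l r ihl ihr =>
      intro hc
      simp only [encodeT] at hc
      have hLb : ∀ x ∈ encodeT l s, x < s + l.numNodes + r.numNodes := by
        intro x hx
        have := mem_range1.mp ((encodeT_perm l s).subset hx)
        omega
      have hRb : ∀ x ∈ encodeT r (s + l.numNodes), x < s + l.numNodes + r.numNodes := by
        intro x hx
        have := mem_range1.mp ((encodeT_perm r _).subset hx)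
        omega
      rcases contains_231_append hLb hRb hc with h | h | ⟨a, ha, b, hb, hba⟩
      · exact ihl s h
      · exact ihr _ h
      · have h1 := mem_range1.mp ((encodeT_perm l s).subset ha)
        have h2 := mem_range1.mp ((encodeT_perm r _).subset hb)
        omega

lemma encodeT_inj : ∀ t₁ t₂ : BinaryTree Unit, ∀ s : ℕ, encodeT t₁ s = encodeT t₂ s → t₁ = t₂ := by
  intro t₁
  induction t₁ with
  | nil =>
      intro t₂ s h
      cases t₂ with
      | nil => rfl
      | node _ l r =>
          exfalso
          have := congrArg List.length h
          simp [encodeT] at this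
  | node _ l r ihl ihr =>
      intro t₂ s h
      cases t₂ with
      | nil =>
          exfalso
          have := congrArg List.length h
          simp [encodeT] at this
      | node u2 l₂ r₂ =>
          have hlen : l.numNodes + r.numNodes = l₂.numNodes + r₂.numNodes := by
            have := congrArg List.length h
            simp [encodeT, encodeT_length] at this
            omega
          simp only [encodeT] at h
          have hM : s + l₂.numNodes + r₂.numNodes = s + l.numNodes + r.numNodes := by omega
          rw [hM] at h
          have hnotmem1 : (s + l.numNodes + r.numNodes) ∉ encodeT l s := by
            intro hx
            have := mem_range1.mp ((encodeT_perm l s).subset hx)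
            omega
          have hnotmem2 : (s + l.numNodes + r.numNodes) ∉ encodeT l₂ s := by
            intro hx
            have := mem_range1.mp ((encodeT_perm l₂ s).subset hx)
            omega
          obtain ⟨e1, e2⟩ := notmem_split h hnotmem1 hnotmem2
          have hl : l = l₂ := ihl l₂ s e1
          have hln : l.numNodes = l₂.numNodes := by rw [hl]
          have hr : r = r₂ := ihr r₂ (s + l.numNodes) (by rw [hln] at e2 ⊢; exact e2)
          cases u2
          rw [hl, hr]

lemma encodeT_surj : ∀ m s : ℕ, ∀ ρ : List ℕ, ρ.Perm (List.range' s m) →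
    ¬ Contains ρ [2,3,1] → ∃ t : BinaryTree Unit, t.numNodes = m ∧ encodeT t s = ρ := by
  intro m
  induction m using Nat.strong_induction_on with
  | _ m ih =>
    match m with
    | 0 =>
        intro s ρ h _
        obtain rfl : ρ = [] := List.perm_nil.mp (by simpa using h)
        exact ⟨BinaryTree.nil, rfl, rfl⟩
    | Nat.succ m' =>
        intro s ρ hperm hav
        obtain ⟨L, R, rfl, hkm, hLp, hRp, hLa, hRa⟩ := decomp231 hperm hav
        obtain ⟨tl, htl, hetl⟩ := ih L.length (by omega) s L hLp hLa
        obtain ⟨tr, htr, hetr⟩ := ih (m' - L.length) (by omega) (s + L.length) R hRp hRa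
        refine ⟨BinaryTree.node () tl tr, by simp [BinaryTree.numNodes, htl, htr]; omega, ?_⟩
        simp only [encodeT, htl, htr, hetl]
        rw [show s + L.length + (m' - L.length) = s + m' from by omega, hetr]

lemma count231 (s m : ℕ) :
    {ρ : List ℕ | ρ.Perm (List.range' s m) ∧ ¬ Contains ρ [2,3,1]}.ncard = catalan m := by
  have himg : {ρ : List ℕ | ρ.Perm (List.range' s m) ∧ ¬ Contains ρ [2,3,1]}
      = (fun t => encodeT t s) '' ↑(BinaryTree.treesOfNumNodesEq m) := by
    ext ρ
    simp only [Set.mem_setOf_eq, Set.mem_image, Finset.coe_sort_coe, Finset.mem_coe,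
      BinaryTree.mem_treesOfNumNodesEq]
    constructor
    · rintro ⟨hp, ha⟩
      obtain ⟨t, htn, hte⟩ := encodeT_surj m s ρ hp ha
      exact ⟨t, htn, hte⟩
    · rintro ⟨t, htn, rfl⟩
      exact ⟨htn ▸ encodeT_perm t s, encodeT_avoids t s⟩
  rw [himg, Set.ncard_image_of_injOn (fun t₁ _ t₂ _ h => encodeT_inj t₁ t₂ s h),
    Set.ncard_coe_finset, BinaryTree.treesOfNumNodesEq_card_eq_catalan]

end Counting

/-- For non-identity `τ` of length ≥ 3: `s_{213,τ}` sorts `π` of length `n` to the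
identity iff `π = n·ρ` with `ρ` a 231-avoiding permutation of `{1,…,n-1}`; such
permutations are counted by `C_{n-1}`. -/
theorem stmt12 (τ : List ℕ) (hτ : IsPermList τ) (hτlen : 3 ≤ τ.length)
    (hτid : τ ≠ List.range' 1 τ.length) (n : ℕ) (hn : 1 ≤ n) :
    (∀ π : List ℕ, IsPermList π → π.length = n →
      (sT ({[2,1,3], τ} : Set (List ℕ)) π = List.range' 1 n ↔
        ∃ ρ : List ℕ, π = n :: ρ ∧ ρ.Perm (List.range' 1 (n - 1)) ∧
          ¬ Contains ρ [2,3,1])) ∧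
    {π : List ℕ | IsPermList π ∧ π.length = n ∧
      sT ({[2,1,3], τ} : Set (List ℕ)) π = List.range' 1 n}.ncard
      = catalan (n - 1) := by
  have hT3 : ∀ p ∈ ({[2,1,3], τ} : Set (List ℕ)), 3 ≤ p.length := by
    intro p hp
    rcases (by simpa using hp : p = [2,1,3] ∨ p = τ) with rfl | rfl
    · simp
    · exact hτlen
  have h213 : [2,1,3] ∈ ({[2,1,3], τ} : Set (List ℕ)) := Set.mem_insert _ _
  have hTs : ∀ w : List ℕ, Pairwise (·<·) w → AvoidsSet ({[2,1,3], τ} : Set (List ℕ)) w := by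
    intro w hw p hp
    rcases (by simpa using hp : p = [2,1,3] ∨ p = τ) with rfl | rfl
    · exact sorted_avoids_213 hw
    · exact sorted_avoids_nonid hw hτ hτid
  have hsplitn : List.range' 1 n = List.range' 1 (n-1) ++ [n] := by
    have h2 : n - 1 + 1 = n := by omega
    calc List.range' 1 n = List.range' 1 ((n-1)+1) := by rw [h2]
      _ = List.range' 1 (n-1) ++ [1+(n-1)] := range'_concat1 _ _
      _ = List.range' 1 (n-1) ++ [n] := by rw [show 1+(n-1) = n from by omega]
  have key : ∀ ρ : List ℕ, ρ.Perm (List.range' 1 (n-1)) →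
      sT ({[2,1,3], τ} : Set (List ℕ)) (n :: ρ) = outS ρ ++ [n] := by
    intro ρ hρ
    have hbound : ∀ x ∈ ρ, x < n := by
      intro x hx
      have := mem_range1.mp (hρ.subset hx)
      omega
    have hav : AvoidsSet ({[2,1,3], τ} : Set (List ℕ)) [n] := avoids_short hT3 (by simp)
    have hsim := sTaux_sim hT3 h213 hTs (2*ρ.length) ρ [] [] n (by simp)
      hbound (by simp) (hρ.symm.nodup (List.nodup_range' 1 one_pos))
      (by simp)
    simp only [nil_append] at hsim
    simp only [sT]
    rw [sTaux.eq_def]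
    simp only [if_pos hav]
    rw [hsim, outS, append_assoc]
  have main : ∀ π : List ℕ, IsPermList π → π.length = n →
      (sT ({[2,1,3], τ} : Set (List ℕ)) π = List.range' 1 n ↔
        ∃ ρ : List ℕ, π = n :: ρ ∧ ρ.Perm (List.range' 1 (n - 1)) ∧
          ¬ Contains ρ [2,3,1]) := by
    intro π hπ hlen
    have hπ' : π.Perm (List.range' 1 n) := hlen ▸ hπ
    constructor
    · intro hsort
      obtain ⟨p, w, rfl⟩ : ∃ p w, π = p :: w := by
        cases π with
        | nil => simp at hlen; omega
        | cons p w => exact ⟨p, w, rfl⟩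
      have hp : p = n := by
        have hav2 : AvoidsSet ({[2,1,3], τ} : Set (List ℕ)) [p] := avoids_short hT3 (by simp)
        obtain ⟨z, hz⟩ := sTaux_ends hT3 (2*w.length) w [] [] p (by simp)
        have h1 : sT ({[2,1,3], τ} : Set (List ℕ)) (p::w) = z ++ [p] := by
          simp only [sT]
          rw [sTaux.eq_def]
          simp only [if_pos hav2]
          simpa using hz
        rw [h1, hsplitn] at hsort
        have := (List.append_inj' hsort rfl).2
        simpa using this
      rw [hp] at hπ' hsort
      have hw : w.Perm (List.range' 1 (n-1)) := by
        have h2 : (n :: w).Perm (n :: List.range' 1 (n-1)) := by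
          refine hπ'.trans ?_
          rw [hsplitn]
          exact List.perm_append_singleton _ _
        exact h2.cons_inv
      refine ⟨w, by rw [hp], hw, ?_⟩
      rw [key w hw, hsplitn] at hsort
      exact (knuth (n-1) 1 w hw).mp (List.append_inj' hsort rfl).1
    · rintro ⟨ρ, rfl, hρ, hav⟩
      rw [key ρ hρ, (knuth (n-1) 1 ρ hρ).mpr hav, ← hsplitn]
  refine ⟨main, ?_⟩
  have hset : {π : List ℕ | IsPermList π ∧ π.length = n ∧
      sT ({[2,1,3], τ} : Set (List ℕ)) π = List.range' 1 n}
      = (fun ρ => n :: ρ) ''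
        {ρ : List ℕ | ρ.Perm (List.range' 1 (n-1)) ∧ ¬ Contains ρ [2,3,1]} := by
    ext π
    simp only [Set.mem_setOf_eq, Set.mem_image]
    constructor
    · rintro ⟨h1, h2, h3⟩
      obtain ⟨ρ, rfl, hρ, hav⟩ := (main π h1 h2).mp h3
      exact ⟨ρ, ⟨hρ, hav⟩, rfl⟩
    · rintro ⟨ρ, ⟨hρ, hav⟩, rfl⟩
      have hlen : (n :: ρ).length = n := by
        have := hρ.length_eq
        simp only [List.length_range'] at this
        simp [this]
        omega
      have hπn : IsPermList (n :: ρ) := by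
        unfold IsPermList
        rw [hlen]
        refine ((hρ.cons n).trans ?_)
        rw [hsplitn]
        exact (List.perm_append_singleton _ _).symm
      exact ⟨hπn, hlen, (main _ hπn hlen).mpr ⟨ρ, rfl, hρ, hav⟩⟩
  rw [hset, Set.ncard_image_of_injOn (fun a _ b _ h => by injection h), count231 1 (n-1)]
end
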